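/- Let R be a G-graded ring and I a homogeneous nilpotent ideal. If a is a homogeneous element of R whose image in R/I is graded strongly nil clean, then a is graded strongly nil clean in R. -/

import Mathlib

/-- A `G`-grading of a ring `R`: a family of additive subgroups `C g` with
`C g * C h ⊆ C (g*h)`, `1 ∈ C e`, and `R = ⊕_g C g` (internal direct sum). -/
structure Grading (G : Type*) [Group G] [DecidableEq G] (R : Type*) [Ring R] where
  C : G → AddSubgroup R
  one_mem : (1 : R) ∈ C 1
  mul_mem : ∀ {g h : G} {a b : R}, a ∈ C g → b ∈ C h → a * b ∈ C (g * h)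
  isInternal : DirectSum.IsInternal C

namespace Grading

variable {G : Type*} [Group G] [DecidableEq G] {R : Type*} [Ring R]

/-- An element is homogeneous if it lies in some component. -/
def Homogeneous (A : Grading G R) (a : R) : Prop := ∃ g, a ∈ A.C g

/-- A homogeneous element is graded nil clean if it is the sum of a homogeneous
idempotent and a homogeneous nilpotent. -/
def IsGradedNilClean (A : Grading G R) (a : R) : Prop :=
  ∃ f b : R, A.Homogeneous f ∧ IsIdempotentElem f ∧ A.Homogeneous b ∧
    IsNilpotent b ∧ a = f + b

/-- A graded ring is graded nil clean if every homogeneous element is. -/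
def GradedNilClean (A : Grading G R) : Prop :=
  ∀ a : R, A.Homogeneous a → A.IsGradedNilClean a

/-- Graded strongly nil clean element: the idempotent and nilpotent commute. -/
def IsGradedStronglyNilClean (A : Grading G R) (a : R) : Prop :=
  ∃ f b : R, A.Homogeneous f ∧ IsIdempotentElem f ∧ A.Homogeneous b ∧
    IsNilpotent b ∧ f * b = b * f ∧ a = f + b

def GradedStronglyNilClean (A : Grading G R) : Prop :=
  ∀ a : R, A.Homogeneous a → A.IsGradedStronglyNilClean a

end Grading

namespace Grading

variable {G : Type*} [Group G] [DecidableEq G] {R : Type*} [Ring R]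

/-- A two-sided ideal, viewed as an additive subgroup. -/
def tiAddSubgroup (I : TwoSidedIdeal R) : AddSubgroup R where
  carrier := I
  add_mem' := fun h1 h2 => I.add_mem h1 h2
  zero_mem' := I.zero_mem
  neg_mem' := fun h => I.neg_mem h

/-- A two-sided ideal is homogeneous if each of its elements lies in the sum of
the intersections `I ∩ R_g`, i.e. `I = ⊕_g (I ∩ R_g)`. -/
def HomogeneousTI (A : Grading G R) (I : TwoSidedIdeal R) : Prop :=
  ∀ a ∈ I, a ∈ ⨆ g : G, (A.C g ⊓ tiAddSubgroup I)

/-- The `g`-component of the quotient grading on `R/I`: the image of `R_g`. -/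
def quotC (A : Grading G R) (I : TwoSidedIdeal R) (g : G) :
    AddSubgroup I.ringCon.Quotient :=
  (A.C g).map (I.ringCon.mk' : R →+* I.ringCon.Quotient).toAddMonoidHom

/-- Homogeneous elements of the quotient graded ring `R/I`. -/
def QuotHomogeneous (A : Grading G R) (I : TwoSidedIdeal R)
    (a : I.ringCon.Quotient) : Prop :=
  ∃ g, a ∈ A.quotC I g

/-- The quotient graded ring `R/I` is graded nil clean. -/
def QuotGradedNilClean (A : Grading G R) (I : TwoSidedIdeal R) : Prop :=
  ∀ a : I.ringCon.Quotient, A.QuotHomogeneous I a →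
    ∃ f b : I.ringCon.Quotient, A.QuotHomogeneous I f ∧ IsIdempotentElem f ∧
      A.QuotHomogeneous I b ∧ IsNilpotent b ∧ a = f + b

/-- A quotient element is graded strongly nil clean. -/
def QuotIsGradedStronglyNilClean (A : Grading G R) (I : TwoSidedIdeal R)
    (a : I.ringCon.Quotient) : Prop :=
  ∃ f b : I.ringCon.Quotient, A.QuotHomogeneous I f ∧ IsIdempotentElem f ∧
    A.QuotHomogeneous I b ∧ IsNilpotent b ∧ f * b = b * f ∧ a = f + b

/-- The quotient graded ring `R/I` is graded strongly nil clean. -/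
def QuotGradedStronglyNilClean (A : Grading G R) (I : TwoSidedIdeal R) : Prop :=
  ∀ a : I.ringCon.Quotient, A.QuotHomogeneous I a →
    A.QuotIsGradedStronglyNilClean I a

/-- The ideal `I` is nilpotent: some power `I^n` vanishes, i.e. every product of
`n` elements of `I` is zero. -/
def NilpotentTI (I : TwoSidedIdeal R) : Prop :=
  ∃ n : ℕ, 0 < n ∧ ∀ x : Fin n → R, (∀ i, x i ∈ I) → (List.ofFn x).prod = 0

end Grading


namespace Grading

variable {G : Type*} [Group G] [DecidableEq G] {R : Type*} [Ring R]

noncomputable def decomp (A : Grading G R) : R ≃+ (DirectSum G fun g => A.C g) :=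
  (AddEquiv.ofBijective (DirectSum.coeAddMonoidHom A.C) A.isInternal).symm

noncomputable def proj (A : Grading G R) (g : G) (x : R) : R := (A.decomp x g : R)

theorem decomp_of_mem (A : Grading G R) {g : G} {x : R} (hx : x ∈ A.C g) :
    A.decomp x = DirectSum.of (fun g => A.C g) g ⟨x, hx⟩ := by
  have : (AddEquiv.ofBijective (DirectSum.coeAddMonoidHom A.C) A.isInternal)
      (DirectSum.of (fun g => A.C g) g ⟨x, hx⟩) = x := by
    exact DirectSum.coeAddMonoidHom_of A.C g ⟨x, hx⟩
  rw [decomp, AddEquiv.symm_apply_eq, this]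

theorem proj_of_mem_same (A : Grading G R) {g : G} {x : R} (hx : x ∈ A.C g) :
    A.proj g x = x := by
  rw [proj, decomp_of_mem A hx, DirectSum.of_eq_same]

theorem proj_of_mem_ne (A : Grading G R) {g h : G} {x : R} (hx : x ∈ A.C g)
    (hne : g ≠ h) : A.proj h x = 0 := by
  rw [proj, decomp_of_mem A hx, DirectSum.of_eq_of_ne _ _ _ hne.symm]
  rfl

theorem proj_add (A : Grading G R) (g : G) (x y : R) :
    A.proj g (x + y) = A.proj g x + A.proj g y := by
  simp [proj, map_add, DirectSum.add_apply]

theorem proj_neg (A : Grading G R) (g : G) (x : R) :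
    A.proj g (-x) = -A.proj g x := by
  rw [proj, proj, map_neg]; rfl

theorem proj_zero (A : Grading G R) (g : G) : A.proj g 0 = 0 := by
  simp [proj, map_zero]

theorem proj_sub (A : Grading G R) (g : G) (x y : R) :
    A.proj g (x - y) = A.proj g x - A.proj g y := by
  simp [sub_eq_add_neg, proj_add, proj_neg]

theorem proj_mem (A : Grading G R) {I : TwoSidedIdeal R} (hhom : A.HomogeneousTI I)
    {x : R} (hx : x ∈ I) (g : G) : A.proj g x ∈ I := by
  classical
  have h1 := hhom x hx
  let K : AddSubgroup R :=
    { carrier := {y | ∀ g' : G, A.proj g' y ∈ I}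
      add_mem' := fun hy hz g' => by rw [proj_add]; exact I.add_mem (hy g') (hz g')
      zero_mem' := fun g' => by rw [proj_zero]; exact I.zero_mem
      neg_mem' := fun hy g' => by rw [proj_neg]; exact I.neg_mem (hy g') }
  have h2 : (⨆ h : G, (A.C h ⊓ tiAddSubgroup I)) ≤ K := by
    refine iSup_le fun h => ?_
    intro y hy
    intro g'
    by_cases hgh : h = g'
    · subst hgh; rw [proj_of_mem_same A hy.1]; exact hy.2
    · rw [proj_of_mem_ne A hy.1 hgh]; exact I.zero_mem
  exact h2 h1 g

theorem mem_of_mk'_eq_zero {I : TwoSidedIdeal R} {x : R}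
    (h : I.ringCon.mk' x = 0) : x ∈ I := by
  rw [TwoSidedIdeal.mem_iff]
  have h2 : I.ringCon.mk' x = I.ringCon.mk' 0 := by simpa using h
  exact (RingCon.eq _).mp h2

theorem mk'_eq_zero_of_mem {I : TwoSidedIdeal R} {x : R} (h : x ∈ I) :
    I.ringCon.mk' x = 0 := by
  have h1 := (TwoSidedIdeal.mem_iff _ _).mp h
  have h2 : I.ringCon.mk' x = I.ringCon.mk' 0 := (RingCon.eq _).mpr h1
  simpa using h2

theorem isNilpotent_of_mem_nilpotentTI {I : TwoSidedIdeal R}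
    (hnilp : NilpotentTI I) {x : R} (hx : x ∈ I) : IsNilpotent x := by
  obtain ⟨n, _, hprod⟩ := hnilp
  refine ⟨n, ?_⟩
  have := hprod (fun _ => x) (fun _ => hx)
  rwa [List.ofFn_const, List.prod_replicate] at this

theorem isNilpotent_of_quot_nilpotent {I : TwoSidedIdeal R}
    (hnilp : NilpotentTI I) {x : R} (hx : IsNilpotent (I.ringCon.mk' x)) :
    IsNilpotent x := by
  obtain ⟨m, hm⟩ := hx
  have h1 : x ^ m ∈ I := by
    apply mem_of_mk'_eq_zero
    rw [map_pow]; exact hm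
  obtain ⟨j, hj⟩ := isNilpotent_of_mem_nilpotentTI hnilp h1
  exact ⟨m * j, by rw [pow_mul]; exact hj⟩

theorem aeval_mem_C_one (A : Grading G R) {a : R} (ha : a ∈ A.C 1)
    (P : Polynomial ℤ) : Polynomial.aeval a P ∈ A.C 1 := by
  induction P using Polynomial.induction_on with
  | C r =>
    rw [Polynomial.aeval_C, eq_intCast, ← zsmul_one r]
    exact zsmul_mem A.one_mem r
  | add p q hp hq => rw [map_add]; exact add_mem hp hq
  | monomial n r hpr =>
    rw [pow_succ, ← mul_assoc, map_mul, Polynomial.aeval_X]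
    have := A.mul_mem hpr ha
    rwa [one_mul] at this

end Grading

open Polynomial in
theorem grading_key_poly (N : ℕ) : ∃ U V : Polynomial ℤ,
    X ^ (N + 1) * U + (1 - X) ^ (N + 1) * V = 1 := by
  induction N with
  | zero => exact ⟨1, 1, by ring⟩
  | succ n ih =>
    obtain ⟨U, V, h⟩ := ih
    refine ⟨X ^ n * U ^ 2 + 2 * (1 - X) ^ (n + 1) * U * V,
      (1 - X) ^ n * V ^ 2 + 2 * X ^ (n + 1) * U * V, ?_⟩
    linear_combination (X ^ (n + 1) * U + (1 - X) ^ (n + 1) * V + 1) * h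

open Polynomial in
theorem grading_exists_snc_poly {R : Type*} [Ring R] (a : R)
    (h : IsNilpotent (a - a ^ 2)) :
    ∃ P : Polynomial ℤ, IsIdempotentElem (aeval a P) ∧
      IsNilpotent (a - aeval a P) := by
  obtain ⟨M, hM⟩ := h
  set N := M + 1 with hN
  have hzN : (a - a ^ 2) ^ N = 0 := by rw [hN, pow_succ, hM, zero_mul]
  obtain ⟨U, V, hUV⟩ := grading_key_poly M
  have hc : Commute a (1 - a) := (Commute.one_right a).sub_right (Commute.refl a)
  have hz0 : (aeval a) ((X ^ M * (1 - X) ^ M * (X * (1 - X)) : Polynomial ℤ)) = 0 := by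
    have h1 : (aeval a) ((X ^ M * (1 - X) ^ M * (X * (1 - X)) : Polynomial ℤ))
        = a ^ M * (1 - a) ^ M * (a * (1 - a)) := by
      simp [map_mul, map_pow, map_sub]
    rw [h1, ← hc.mul_pow, ← pow_succ]
    have h2 : a * (1 - a) = a - a ^ 2 := by rw [mul_one_sub, sq]
    rw [h2]; exact hzN
  refine ⟨X ^ N * U, ?_, ?_⟩
  · have hid : (X ^ N * U) * (X ^ N * U) - X ^ N * U
        = -((X ^ M * (1 - X) ^ M * (X * (1 - X))) * (U * V)) := by
      linear_combination (X ^ N * U) * hUV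
    have h3 : (aeval a) (X ^ N * U) * (aeval a) (X ^ N * U) - (aeval a) (X ^ N * U) = 0 := by
      rw [← map_mul, ← map_sub, hid, map_neg, map_mul, hz0, zero_mul, neg_zero]
    exact sub_eq_zero.mp h3
  · have hdiff : X - X ^ N * U
        = (X * (1 - X)) * ((1 - X) ^ M * V - X ^ M * U) := by
      linear_combination (-X) * hUV
    have h4 : a - (aeval a) (X ^ N * U)
        = (aeval a) ((X * (1 - X) : Polynomial ℤ)) * (aeval a) ((1 - X) ^ M * V - X ^ M * U) := by
      have h4' : (aeval a) ((X - X ^ N * U : Polynomial ℤ))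
          = (aeval a) (X * (1 - X) * ((1 - X) ^ M * V - X ^ M * U)) := by rw [hdiff]
      rw [map_sub, aeval_X,
        map_mul (aeval a) (X * (1 - X)) ((1 - X) ^ M * V - X ^ M * U)] at h4'
      exact h4'
    rw [h4]
    have hcomm : Commute ((aeval a) ((X * (1 - X) : Polynomial ℤ)))
        ((aeval a) ((1 - X) ^ M * V - X ^ M * U)) := by
      show _ = _
      rw [← map_mul, ← map_mul, mul_comm]
    refine ⟨N, ?_⟩
    rw [hcomm.mul_pow]
    have h5 : (aeval a) ((X * (1 - X) : Polynomial ℤ)) ^ N = 0 := by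
      have h6 : (aeval a) ((X * (1 - X) : Polynomial ℤ)) = a * (1 - a) := by simp
      rw [h6, show a * (1 - a) = a - a ^ 2 by rw [mul_one_sub, sq]]
      exact hzN
    rw [h5, zero_mul]

/-- Let `I` be a homogeneous nilpotent two-sided ideal of a `G`-graded ring `R`.
If `a` is a homogeneous element of `R` whose image in `R/I` is graded strongly
nil clean, then `a` is graded strongly nil clean in `R`. -/
theorem stmt9 {G : Type*} [Group G] [DecidableEq G] {R : Type*} [Ring R]
    (A : Grading G R) (I : TwoSidedIdeal R) (hhom : A.HomogeneousTI I)
    (hnilp : Grading.NilpotentTI I) (a : R) (ha : A.Homogeneous a)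
    (hq : A.QuotIsGradedStronglyNilClean I (I.ringCon.mk' a)) :
    A.IsGradedStronglyNilClean a := by
  classical
  obtain ⟨fq, bq, ⟨g, hfq⟩, hfid, ⟨h, hbq⟩, hbnil, hcm, heq⟩ := hq
  obtain ⟨f₀, hf₀C, hf₀⟩ := AddSubgroup.mem_map.mp hfq
  obtain ⟨b₀, hb₀C, hb₀⟩ := AddSubgroup.mem_map.mp hbq
  have hf₀' : I.ringCon.mk' f₀ = fq := hf₀
  have hb₀' : I.ringCon.mk' b₀ = bq := hb₀
  by_cases hae : a ∈ A.C 1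
  · -- identity component case
    have hz : IsNilpotent (a - a ^ 2) := by
      apply Grading.isNilpotent_of_quot_nilpotent hnilp
      have hπz : I.ringCon.mk' (a - a ^ 2) = bq * (1 - fq - fq - bq) := by
        rw [map_sub, map_pow, heq, sq]
        have hfid' : fq * fq = fq := hfid
        rw [add_mul, mul_add, mul_add, mul_sub, mul_sub, mul_sub, mul_one, hfid', hcm]
        abel
      rw [hπz]
      have hcomm2 : Commute bq (1 - fq - fq - bq) := by
        show _ = _
        rw [mul_sub, mul_sub, mul_sub, mul_one, sub_mul, sub_mul, sub_mul, one_mul, hcm]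
      exact hcomm2.isNilpotent_mul_right hbnil
    obtain ⟨P, hPid, hPnil⟩ := grading_exists_snc_poly a hz
    refine ⟨Polynomial.aeval a P, a - Polynomial.aeval a P,
      ⟨1, A.aeval_mem_C_one hae P⟩, hPid,
      ⟨1, sub_mem hae (A.aeval_mem_C_one hae P)⟩, hPnil, ?_, by abel⟩
    have hfa : Polynomial.aeval a P * a = a * Polynomial.aeval a P := by
      have h1 : Polynomial.aeval a (P * Polynomial.X) = Polynomial.aeval a (Polynomial.X * P) := by
        rw [mul_comm]
      rwa [map_mul, map_mul, Polynomial.aeval_X] at h1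
    rw [mul_sub, sub_mul, hfa]
  · -- non-identity component: a is nilpotent
    obtain ⟨k, hak⟩ := ha
    have hk1 : k ≠ 1 := fun hh => hae (hh ▸ hak)
    suffices hnil : IsNilpotent a by
      refine ⟨0, a, ⟨1, (A.C 1).zero_mem⟩, ?_, ⟨k, hak⟩, hnil, by simp, by simp⟩
      show (0 : R) * 0 = 0
      simp
    have hx : a - f₀ - b₀ ∈ I := by
      apply Grading.mem_of_mk'_eq_zero
      rw [map_sub, map_sub, hf₀', hb₀', heq]
      abel
    by_cases hgk : g = k
    · -- f₀ ∈ I since its degree would not be idempotent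
      subst hgk
      have hfI : f₀ * f₀ - f₀ ∈ I := by
        apply Grading.mem_of_mk'_eq_zero
        rw [map_sub, map_mul, hf₀']
        have hfid' : fq * fq = fq := hfid
        rw [hfid', sub_self]
      have hproj := A.proj_mem hhom hfI g
      have hkk : g * g ≠ g := fun hh => hk1 (by
        have := mul_eq_right.mp hh
        exact this)
      have hpe : A.proj g (f₀ * f₀ - f₀) = -f₀ := by
        rw [Grading.proj_sub, A.proj_of_mem_same hf₀C,
          A.proj_of_mem_ne (A.mul_mem hf₀C hf₀C) hkk, zero_sub]
      rw [hpe] at hproj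
      have hf0I : f₀ ∈ I := by
        have := I.neg_mem hproj
        rwa [neg_neg] at this
      have hfq0 : fq = 0 := by rw [← hf₀']; exact Grading.mk'_eq_zero_of_mem hf0I
      apply Grading.isNilpotent_of_quot_nilpotent hnilp
      rw [heq, hfq0, zero_add]
      exact hbnil
    · by_cases hhk : h = k
      · subst hhk
        have hpe : A.proj h (a - f₀ - b₀) = a - b₀ := by
          rw [Grading.proj_sub, Grading.proj_sub, A.proj_of_mem_same hak,
            A.proj_of_mem_ne hf₀C hgk, A.proj_of_mem_same hb₀C, sub_zero]
        have habI : a - b₀ ∈ I := by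
          have := A.proj_mem hhom hx h
          rwa [hpe] at this
        have hab : I.ringCon.mk' a = bq := by
          have h0 := Grading.mk'_eq_zero_of_mem habI
          rw [map_sub, hb₀', sub_eq_zero] at h0
          exact h0
        apply Grading.isNilpotent_of_quot_nilpotent hnilp
        rw [hab]; exact hbnil
      · have hpe : A.proj k (a - f₀ - b₀) = a := by
          rw [Grading.proj_sub, Grading.proj_sub, A.proj_of_mem_same hak,
            A.proj_of_mem_ne hf₀C hgk, A.proj_of_mem_ne hb₀C hhk, sub_zero, sub_zero]
        have haI : a ∈ I := by
          have := A.proj_mem hhom hx k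
          rwa [hpe] at this
        exact Grading.isNilpotent_of_mem_nilpotentTI hnilp haI
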